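/- arXiv:1705.09681 — 4 statements merged into one kernel-verified Lean document; each statement's English description precedes it below -/
import Mathlib

section
/- Let p be a monic nonconstant polynomial with integer coefficients. If p has a complex root α with 0 < |α| < 1, then p also has a complex root β with |β| > 1. -/
open Polynomial

lemma aux_prod_le_one (t : Multiset ℝ) (h : ∀ x ∈ t, 0 ≤ x ∧ x ≤ 1) : t.prod ≤ 1 := by
  induction t using Multiset.induction with
  | empty => simp
  | cons a s ih =>
    simp only [Multiset.prod_cons]
    have ha := h a (Multiset.mem_cons_self a s)
    have hs := ih (fun x hx => h x (Multiset.mem_cons_of_mem hx))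
    have hsnn : 0 ≤ s.prod := Multiset.prod_nonneg fun x hx => (h x (Multiset.mem_cons_of_mem hx)).1
    nlinarith [ha.1, ha.2]

lemma aux_abs_prod (t : Multiset ℂ) : ‖t.prod‖ = (t.map norm).prod := by
  induction t using Multiset.induction with
  | empty => simp
  | cons a s ih => simp [map_mul, ih]

/-- If a monic nonconstant integer polynomial has a complex root `α` with
`0 < |α| < 1`, then it also has a complex root `β` with `|β| > 1`. -/
theorem stmt_0 (p : Polynomial ℤ) (hmonic : p.Monic) (hdeg : 1 ≤ p.natDegree)
    (α : ℂ) (hα : α ∈ (p.map (Int.castRingHom ℂ)).roots)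
    (h0 : 0 < ‖α‖) (h1 : ‖α‖ < 1) :
    ∃ β ∈ (p.map (Int.castRingHom ℂ)).roots, 1 < ‖β‖ := by
  by_contra hcon
  push_neg at hcon
  set P := p.map (Int.castRingHom ℂ) with hP
  have hPm : P.Monic := hmonic.map _
  have hPne : P ≠ 0 := hPm.ne_zero
  have hsplit : P.Splits :=
    IsAlgClosed.splits P
  have heq : P = (P.roots.map fun a => X - C a).prod :=
    hsplit.eq_prod_roots_of_monic hPm
  set m := P.roots.count 0 with hm
  set s := P.roots.filter (· ≠ 0) with hs
  have hdecomp : P.roots = Multiset.replicate m 0 + s := by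
    conv_lhs => rw [← Multiset.filter_add_not (· = 0) P.roots]
    congr 1
    · rw [Multiset.filter_eq', hm]
  set Q := (s.map fun a => X - C a).prod with hQ
  have heq2 : P = X ^ m * Q := by
    rw [heq, hdecomp, Multiset.map_add, Multiset.prod_add, Multiset.map_replicate]
    simp [Multiset.prod_replicate, hQ]
  have hcoeff : P.coeff m = Q.coeff 0 := by
    rw [heq2]
    simpa using Polynomial.coeff_X_pow_mul Q m 0
  have hQ0 : Q.coeff 0 = (s.map fun a => -a).prod := by
    rw [Polynomial.coeff_zero_eq_eval_zero, hQ, Polynomial.eval_multiset_prod, Multiset.map_map]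
    congr 1
    apply Multiset.map_congr rfl
    intro x _
    simp
  have hQ0ne : Q.coeff 0 ≠ 0 := by
    rw [hQ0]
    apply Multiset.prod_ne_zero
    intro hmem
    rw [Multiset.mem_map] at hmem
    obtain ⟨a, ha, ha0⟩ := hmem
    rw [hs, Multiset.mem_filter] at ha
    exact ha.2 (by simpa using ha0.symm)
  have hpc : P.coeff m = ((p.coeff m : ℤ) : ℂ) := by
    rw [hP, Polynomial.coeff_map]; rfl
  have hpcne : p.coeff m ≠ 0 := by
    intro h
    apply hQ0ne
    rw [← hcoeff, hpc, h]; simp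
  have hge1 : (1 : ℝ) ≤ ‖P.coeff m‖ := by
    rw [hpc, Complex.norm_intCast]
    have : (1 : ℤ) ≤ |p.coeff m| := Int.one_le_abs hpcne
    calc (1:ℝ) ≤ ((|p.coeff m| : ℤ) : ℝ) := by exact_mod_cast this
      _ = |((p.coeff m : ℤ) : ℝ)| := Int.cast_abs
  -- product of abs of nonzero roots ≥ 1
  have hprod : (s.map norm).prod = ‖P.coeff m‖ := by
    rw [hcoeff, hQ0, aux_abs_prod, Multiset.map_map]
    congr 1
    apply Multiset.map_congr rfl
    intro x _
    simp
  have hαs : α ∈ s := by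
    rw [hs, Multiset.mem_filter]
    refine ⟨hα, ?_⟩
    intro h
    rw [h] at h0
    simp at h0
  -- now derive contradiction
  have hsplit' : s = α ::ₘ s.erase α := (Multiset.cons_erase hαs).symm
  have hle : (s.map norm).prod ≤ ‖α‖ * ((s.erase α).map norm).prod := by
    conv_lhs => rw [hsplit']
    rw [Multiset.map_cons, Multiset.prod_cons]
  have hrest : ((s.erase α).map norm).prod ≤ 1 := by
    apply aux_prod_le_one
    intro x hx
    rw [Multiset.mem_map] at hx
    obtain ⟨b, hb, rfl⟩ := hx
    have hbs : b ∈ s := Multiset.mem_of_mem_erase hb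
    have hbr : b ∈ P.roots := by
      rw [hs, Multiset.mem_filter] at hbs; exact hbs.1
    exact ⟨norm_nonneg b, hcon b hbr⟩
  have : (s.map norm).prod < 1 := by
    calc (s.map norm).prod ≤ ‖α‖ * ((s.erase α).map norm).prod := hle
      _ ≤ ‖α‖ * 1 := by
          apply mul_le_mul_of_nonneg_left hrest (norm_nonneg α)
      _ < 1 := by rwa [mul_one]
  rw [hprod] at this
  linarith
end

section
/- The polynomial X^6 + 4X^5 + 4X^4 + 4X^2 + 4X + 1 with integer coefficients is irreducible over ℚ and has a complex root α with |α| = 1 such that α^n ≠ 1 for every integer n ≥ 1. -/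
open Polynomial

/-- The polynomial `X^6 + 4X^5 + 4X^4 + 4X^2 + 4X + 1` over `ℤ`. -/
noncomputable def examplePoly : Polynomial ℤ :=
  Polynomial.X ^ 6 + 4 * Polynomial.X ^ 5 + 4 * Polynomial.X ^ 4 +
    4 * Polynomial.X ^ 2 + 4 * Polynomial.X + 1

lemma examplePoly_monic : examplePoly.Monic := by
  unfold examplePoly; monicity!

lemma examplePoly_natDegree : examplePoly.natDegree = 6 := by
  unfold examplePoly; compute_degree!

lemma root_bound (z : ℂ) (hz : z^6 + 4*z^5 + 4*z^4 + 4*z^2 + 4*z + 1 = 0) :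
    ‖z‖ < 5 := by
  by_contra hc
  push_neg at hc
  set r := ‖z‖ with hr
  have h6 : z^6 = -(4*z^5 + 4*z^4 + 4*z^2 + 4*z + 1) := by linear_combination hz
  have habs : r ^ 6 ≤ 4*r^5 + 4*r^4 + 4*r^2 + 4*r + 1 := by
    have := congrArg (‖·‖) h6
    simp only [norm_pow, norm_neg] at this
    rw [this]
    calc ‖(4*z^5 + 4*z^4 + 4*z^2 + 4*z + 1)‖
        ≤ ‖(4*z^5 + 4*z^4 + 4*z^2 + 4*z)‖ + ‖(1:ℂ)‖ := norm_add_le _ _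
      _ ≤ (‖(4*z^5 + 4*z^4 + 4*z^2)‖ + ‖(4*z)‖) + ‖(1:ℂ)‖ := by
          gcongr; exact norm_add_le _ _
      _ ≤ ((‖(4*z^5 + 4*z^4)‖ + ‖(4*z^2)‖) + ‖(4*z)‖) +
            ‖(1:ℂ)‖ := by gcongr; exact norm_add_le _ _
      _ ≤ (((‖(4*z^5)‖ + ‖(4*z^4)‖) + ‖(4*z^2)‖) +
            ‖(4*z)‖) + ‖(1:ℂ)‖ := by gcongr; exact norm_add_le _ _
      _ = 4*r^5 + 4*r^4 + 4*r^2 + 4*r + 1 := by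
          simp [norm_mul, norm_pow, hr]
  have hr0 : (0:ℝ) ≤ r := norm_nonneg z
  have e1 : 5*r ≤ r^2 := by nlinarith
  have e2 : 5*r^2 ≤ r^3 := by nlinarith
  have e3 : 5*r^3 ≤ r^4 := by nlinarith
  have e4 : 5*r^4 ≤ r^5 := by nlinarith
  have e5 : 5*r^5 ≤ r^6 := by nlinarith
  nlinarith

lemma eval_mapC (z : ℂ) :
    eval z (examplePoly.map (Int.castRingHom ℂ)) = z^6 + 4*z^5 + 4*z^4 + 4*z^2 + 4*z + 1 := by
  simp [examplePoly]

lemma mprod (s : Multiset ℝ) (h : ∀ x ∈ s, 3 ≤ x) : (3:ℝ) ^ Multiset.card s ≤ s.prod := by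
  induction s using Multiset.induction with
  | empty => simp
  | cons a s ih =>
    simp only [Multiset.card_cons, Multiset.prod_cons, pow_succ]
    have ha := h a (Multiset.mem_cons_self a s)
    have hs := ih (fun x hx => h x (Multiset.mem_cons_of_mem hx))
    have h1 : (0:ℝ) ≤ 3 ^ Multiset.card s := by positivity
    calc (3:ℝ) ^ Multiset.card s * 3 ≤ s.prod * a := by
          apply mul_le_mul hs ha (by norm_num) (le_trans h1 hs)
      _ = a * s.prod := mul_comm _ _

lemma eval_big (g : Polynomial ℤ) (hg : g.Monic) (hd : 1 ≤ g.natDegree)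
    (hdvd : g ∣ examplePoly) : ¬ IsUnit (eval 8 g) := by
  intro hu
  set G := g.map (Int.castRingHom ℂ) with hG
  have hGm : G.Monic := hg.map _
  have hGd : G.natDegree = g.natDegree := hg.natDegree_map _
  have hsplit : G.Splits := IsAlgClosed.splits G
  have hcard : Multiset.card G.roots = G.natDegree := (splits_iff_card_roots).mp hsplit
  have hprod : G = (G.roots.map (fun a => X - C a)).prod :=
    hsplit.eq_prod_roots_of_monic hGm
  have h8 : ((eval 8 g : ℤ) : ℂ) = eval (8:ℂ) G := by
    rw [show ((8:ℂ)) = (Int.castRingHom ℂ) 8 by norm_num, hG, eval_map, eval₂_at_apply]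
    simp
  have hev : eval (8:ℂ) G = (G.roots.map (fun a => (8:ℂ) - a)).prod := by
    conv_lhs => rw [hprod]
    rw [eval_multiset_prod, Multiset.map_map]
    simp [Function.comp]
  -- every root of G has abs < 5
  have hroots : ∀ a ∈ G.roots, (3:ℝ) ≤ ‖(8 - a)‖ := by
    intro a ha
    have hra : IsRoot G a := isRoot_of_mem_roots ha
    obtain ⟨k, hk⟩ := hdvd
    have : eval a (examplePoly.map (Int.castRingHom ℂ)) = 0 := by
      rw [hk, Polynomial.map_mul, eval_mul, ← hG, hra.eq_zero, zero_mul]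
    rw [eval_mapC] at this
    have hb := root_bound a this
    have h1 : (8:ℝ) - ‖a‖ ≤ ‖(8 - a)‖ := by
      have := norm_sub_norm_le (8:ℂ) a
      simpa using this
    linarith
  have habs : (3:ℝ) ≤ ‖((eval 8 g : ℤ) : ℂ)‖ := by
    rw [h8, hev, show ‖_‖ = (normHom : ℂ →*₀ ℝ) _ from rfl, map_multiset_prod (normHom : ℂ →*₀ ℝ), Multiset.map_map]
    have hle := mprod ((G.roots.map (fun a => (8:ℂ) - a)).map (normHom : ℂ →*₀ ℝ)) ?_
    · rw [Multiset.map_map] at hle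
      refine le_trans ?_ hle
      rw [Multiset.card_map, hcard, hGd]
      calc (3:ℝ) = 3 ^ 1 := (pow_one 3).symm
        _ ≤ 3 ^ g.natDegree := by
            apply pow_le_pow_right₀ (by norm_num) hd
    · intro x hx
      rw [Multiset.map_map] at hx
      obtain ⟨a, ha, rfl⟩ := Multiset.mem_map.mp hx
      exact hroots a ha
  rcases Int.isUnit_iff.mp hu with h1 | h1 <;> rw [h1] at habs <;> norm_num at habs

lemma examplePoly_irred : Irreducible examplePoly := by
  constructor
  · intro hu
    have := natDegree_eq_zero_of_isUnit hu
    rw [examplePoly_natDegree] at this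
    exact absurd this (by norm_num)
  · intro g h hgh
    have hlc : g.leadingCoeff * h.leadingCoeff = 1 := by
      rw [← leadingCoeff_mul, ← hgh]; exact examplePoly_monic
    have hdeg : g.natDegree + h.natDegree = 6 := by
      rw [← examplePoly_natDegree, hgh,
        natDegree_mul (fun h0 => by simp [h0] at hlc) (fun h0 => by simp [h0] at hlc)]
    -- key: monic factorization version
    have key : ∀ g' h' : Polynomial ℤ, g'.Monic → h'.Monic → examplePoly = g' * h' →
        g'.natDegree = 0 ∨ h'.natDegree = 0 := by
      intro g' h' hg' hh' hf
      by_contra hcon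
      push_neg at hcon
      obtain ⟨hg1, hh1⟩ := hcon
      have hp : Prime (409889 : ℤ) := by
        rw [Int.prime_iff_natAbs_prime]; norm_num
      have hev : eval 8 examplePoly = 409889 := by
        simp [examplePoly]
      have : (409889 : ℤ) = eval 8 g' * eval 8 h' := by
        rw [← hev, hf, eval_mul]
      rcases (hp.irreducible.isUnit_or_isUnit this) with hu | hu
      · exact eval_big g' hg' (by omega) ⟨h', hf⟩ hu
      · exact eval_big h' hh' (by omega) ⟨g', by rw [hf, mul_comm]⟩ hu
    rcases Int.mul_eq_one_iff_eq_one_or_neg_one.mp hlc with ⟨hg1, hh1⟩ | ⟨hg1, hh1⟩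
    · rcases key g h hg1 hh1 hgh with h0 | h0
      · left
        have : g = 1 := (Polynomial.Monic.natDegree_eq_zero hg1).mp h0
        simp [this]
      · right
        have : h = 1 := (Polynomial.Monic.natDegree_eq_zero hh1).mp h0
        simp [this]
    · have hgm : (-g).Monic := by
        unfold Polynomial.Monic; rw [leadingCoeff_neg, hg1]; norm_num
      have hhm : (-h).Monic := by
        unfold Polynomial.Monic; rw [leadingCoeff_neg, hh1]; norm_num
      rcases key (-g) (-h) hgm hhm (by rw [neg_mul_neg, hgh]) with h0 | h0
      · left
        have : -g = 1 := (Polynomial.Monic.natDegree_eq_zero hgm).mp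
          (by simpa using h0)
        have : g = -1 := by linear_combination -this
        simp [this]
      · right
        have : -h = 1 := (Polynomial.Monic.natDegree_eq_zero hhm).mp
          (by simpa using h0)
        have : h = -1 := by linear_combination -this
        simp [this]

lemma exists_root : ∃ α : ℂ, ‖α‖ = 1 ∧
    eval α (examplePoly.map (Int.castRingHom ℂ)) = 0 := by
  obtain ⟨y, hy, hqy⟩ : ∃ y ∈ Set.Icc (1:ℝ) 2, y^3 + 4*y^2 + y - 8 = 0 := by
    have hc : ContinuousOn (fun y : ℝ => y^3 + 4*y^2 + y - 8) (Set.Icc 1 2) := by fun_prop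
    have h0 : (0:ℝ) ∈ Set.Icc ((fun y : ℝ => y^3 + 4*y^2 + y - 8) 1)
        ((fun y : ℝ => y^3 + 4*y^2 + y - 8) 2) := by norm_num
    obtain ⟨y, hy, hyy⟩ := intermediate_value_Icc (by norm_num : (1:ℝ) ≤ 2) hc h0
    exact ⟨y, hy, hyy⟩
  obtain ⟨hy1, hy2⟩ := hy
  set a : ℝ := y/2 with ha
  have ha2 : a^2 ≤ 1 := by rw [ha]; nlinarith
  set b : ℝ := Real.sqrt (1 - a^2) with hb
  have hb2 : b^2 = 1 - a^2 := Real.sq_sqrt (by linarith)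
  set α : ℂ := ⟨a, b⟩ with hα
  have hyα : y = 2*a := by rw [ha]; ring
  refine ⟨α, ?_, ?_⟩
  · rw [Complex.norm_def, Complex.normSq_mk]
    have : a * a + b * b = 1 := by nlinarith
    rw [this, Real.sqrt_one]
  · have hquad : α^2 - (y:ℂ)*α + 1 = 0 := by
      rw [Complex.ext_iff]
      constructor
      · simp [hα, pow_two, Complex.mul_re, hyα]
        nlinarith
      · simp [hα, pow_two, Complex.mul_im, hyα]
        ring
    have hq' : (y:ℂ)^3 + 4*(y:ℂ)^2 + (y:ℂ) - 8 = 0 := by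
      have : ((y^3 + 4*y^2 + y - 8 : ℝ) : ℂ) = 0 := by rw [hqy]; norm_num
      push_cast at this
      linear_combination this
    rw [eval_mapC]
    linear_combination (α^4 + (4+(y:ℂ))*α^3 + (3+4*(y:ℂ)+(y:ℂ)^2)*α^2 + (4+(y:ℂ))*α + 1) * hquad
      + α^3 * hq'

lemma not_root_of_unity (α : ℂ) (hroot : eval α (examplePoly.map (Int.castRingHom ℂ)) = 0)
    (n : ℕ) (hn : 1 ≤ n) (h1 : α ^ n = 1) : False := by
  have hirr : Irreducible (examplePoly.map (Int.castRingHom ℚ)) :=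
    (Polynomial.IsPrimitive.Int.irreducible_iff_irreducible_map_cast examplePoly_monic.isPrimitive).mp examplePoly_irred
  have hmon : (examplePoly.map (Int.castRingHom ℚ)).Monic := examplePoly_monic.map _
  have haev : aeval α (examplePoly.map (Int.castRingHom ℚ)) = 0 := by
    rw [aeval_def, eval₂_map]
    rw [eval_map] at hroot
    convert hroot using 2
    exact RingHom.ext_int _ _
  have hmin : minpoly ℚ α = examplePoly.map (Int.castRingHom ℚ) :=
    (minpoly.eq_of_irreducible_of_monic hirr haev hmon).symm
  have hfin : IsOfFinOrder α := isOfFinOrder_iff_pow_eq_one.mpr ⟨n, by omega, h1⟩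
  have hd : 0 < orderOf α := hfin.orderOf_pos
  have hprim : IsPrimitiveRoot α (orderOf α) := IsPrimitiveRoot.orderOf α
  have hcyc : cyclotomic (orderOf α) ℚ = examplePoly.map (Int.castRingHom ℚ) := by
    rw [cyclotomic_eq_minpoly_rat hprim hd, hmin]
  have hev18 : eval (1:ℚ) (examplePoly.map (Int.castRingHom ℚ)) = 18 := by
    simp [examplePoly]; norm_num
  by_cases hpp : ∃ p k : ℕ, Nat.Prime p ∧ p ^ k = orderOf α
  · obtain ⟨p, k, hp, hpk⟩ := hpp
    cases k with
    | zero =>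
      rw [pow_zero] at hpk
      rw [← hpk, cyclotomic_one] at hcyc
      have := congrArg (eval (1:ℚ)) hcyc
      rw [hev18] at this
      simp at this
    | succ j =>
      haveI := Fact.mk hp
      rw [← hpk] at hcyc
      have := congrArg (eval (1:ℚ)) hcyc
      rw [hev18, eval_one_cyclotomic_prime_pow] at this
      have hp18 : p = 18 := by exact_mod_cast this
      rw [hp18] at hp
      norm_num at hp
  · push_neg at hpp
    have := congrArg (eval (1:ℚ)) hcyc
    rw [hev18, eval_one_cyclotomic_not_prime_pow (fun {p} hp k => hpp p k hp)] at this
    norm_num at this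

/-- The polynomial `X^6 + 4X^5 + 4X^4 + 4X^2 + 4X + 1` is irreducible over `ℚ`
and has a complex root `α` with `|α| = 1` which is not a root of unity. -/
theorem stmt_2 :
    Irreducible (examplePoly.map (Int.castRingHom ℚ)) ∧
    ∃ α ∈ (examplePoly.map (Int.castRingHom ℂ)).roots,
      ‖α‖ = 1 ∧ ∀ n : ℕ, 1 ≤ n → α ^ n ≠ 1 := by
  refine ⟨(Polynomial.IsPrimitive.Int.irreducible_iff_irreducible_map_cast
    examplePoly_monic.isPrimitive).mp examplePoly_irred, ?_⟩
  obtain ⟨α, habs, hroot⟩ := exists_root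
  refine ⟨α, ?_, habs, fun n hn h1 => absurd h1 (fun h1 => not_root_of_unity α hroot n hn h1)⟩
  rw [mem_roots']
  exact ⟨(examplePoly_monic.map _).ne_zero, hroot⟩
end

section
/- Let α ∈ ℂ with |α| ≠ 1. Then the sequence (1/n)·log|1 − α^n| converges to log(max(1, |α|)) as n → ∞. -/
open Filter

lemma aux_lt_one (β : ℂ) (hβ : ‖β‖ < 1) :
    Tendsto (fun n : ℕ => (1 / n : ℝ) * Real.log ‖1 - β ^ n‖)
      atTop (nhds 0) := by
  have h1 : Tendsto (fun n : ℕ => β ^ n) atTop (nhds 0) :=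
    tendsto_pow_atTop_nhds_zero_of_norm_lt_one hβ
  have h2 : Tendsto (fun n : ℕ => ‖1 - β ^ n‖) atTop (nhds 1) := by
    have hc : Continuous fun x : ℂ => ‖1 - x‖ := by continuity
    have := (hc.tendsto 0).comp h1
    simpa [Function.comp_def] using this
  have h3 : Tendsto (fun n : ℕ => Real.log ‖1 - β ^ n‖) atTop (nhds 0) := by
    have := ((Real.continuousAt_log one_ne_zero).tendsto).comp h2
    simpa [Function.comp_def] using this
  have h4 : Tendsto (fun n : ℕ => (1 / n : ℝ)) atTop (nhds 0) :=
    tendsto_one_div_atTop_nhds_zero_nat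
  simpa using h4.mul h3

/-- For `α ∈ ℂ` with `|α| ≠ 1`, the sequence `(1/n)·log|1 - α^n|` converges to
`log (max 1 |α|)`. -/
theorem stmt_4 (α : ℂ) (h : ‖α‖ ≠ 1) :
    Filter.Tendsto (fun n : ℕ => (1 / n : ℝ) * Real.log ‖1 - α ^ n‖)
      Filter.atTop (nhds (Real.log (max 1 ‖α‖))) := by
  rcases lt_or_gt_of_ne h with hlt | hgt
  · rw [max_eq_left hlt.le, Real.log_one]
    exact aux_lt_one α hlt
  · have hα0 : α ≠ 0 := by
      intro h0; rw [h0] at hgt; simp at hgt; linarith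
    have hinv : ‖α⁻¹‖ < 1 := by
      rw [norm_inv]
      exact inv_lt_one_of_one_lt₀ hgt
    have haux := aux_lt_one α⁻¹ hinv
    have key : ∀ᶠ n : ℕ in atTop,
        Real.log ‖α‖ + (1 / n : ℝ) * Real.log ‖1 - (α⁻¹) ^ n‖
        = (1 / n : ℝ) * Real.log ‖1 - α ^ n‖ := by
      filter_upwards [eventually_ge_atTop 1] with n hn
      have hn0 : (n : ℝ) ≠ 0 := Nat.cast_ne_zero.mpr (by omega)
      have hfac : (1 : ℂ) - α ^ n = -(α ^ n) * (1 - (α⁻¹) ^ n) := by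
        rw [neg_mul, mul_sub, mul_one, ← mul_pow, mul_inv_cancel₀ hα0, one_pow]
        ring
      have habs : ‖1 - α ^ n‖
          = ‖α‖ ^ n * ‖1 - (α⁻¹) ^ n‖ := by
        rw [hfac, norm_mul, norm_neg, norm_pow]
      have hne1 : ‖1 - (α⁻¹) ^ n‖ ≠ 0 := by
        rw [ne_eq, norm_eq_zero, sub_eq_zero]
        intro heq
        have : ‖(α⁻¹) ^ n‖ < 1 := by
          rw [norm_pow]
          exact pow_lt_one₀ (by positivity) hinv (by omega)
        rw [← heq] at this
        simp at this
      have hpowne : ‖α‖ ^ n ≠ 0 := pow_ne_zero _ (norm_ne_zero_iff.mpr hα0)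
      rw [habs, Real.log_mul hpowne hne1, Real.log_pow]
      field_simp
    have := (tendsto_const_nhds (x := Real.log ‖α‖)).add haux
    rw [add_zero] at this
    rw [max_eq_right hgt.le]
    exact Filter.Tendsto.congr' key this
end

section
/- Let Q be a monic polynomial with integer coefficients that has at least one nonzero complex root and no complex root that is a root of unity. Then Q has a complex root β with |β| > 1. -/
open Polynomial NumberField IntermediateField

set_option maxHeartbeats 1000000


/-- A complex number is a root of unity if some positive power of it equals `1`. -/
def IsRootOfUnity (ζ : ℂ) : Prop := ∃ m : ℕ, 1 ≤ m ∧ ζ ^ m = 1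

/-- A monic integer polynomial with at least one nonzero complex root and
no complex root that is a root of unity has a complex root `β` with `|β| > 1`. -/
theorem stmt_7 (Q : Polynomial ℤ) (hmonic : Q.Monic)
    (hnonzero : ∃ β ∈ (Q.map (Int.castRingHom ℂ)).roots, β ≠ 0)
    (hru : ∀ β ∈ (Q.map (Int.castRingHom ℂ)).roots, ¬IsRootOfUnity β) :
    ∃ β ∈ (Q.map (Int.castRingHom ℂ)).roots, 1 < ‖β‖ := by
  classical
  by_contra hcon
  push_neg at hcon
  obtain ⟨α, hαmem, hα0⟩ := hnonzero
  have hQmapne : Q.map (Int.castRingHom ℂ) ≠ 0 := (hmonic.map _).ne_zero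
  have haev : Polynomial.aeval α Q = 0 := by
    have := (mem_roots hQmapne).1 hαmem
    simpa [Polynomial.aeval_def, Polynomial.eval_map] using this
  have hint : IsIntegral ℤ α := ⟨Q, hmonic, haev⟩
  have hintQ : IsIntegral ℚ α := hint.tower_top
  -- the number field
  let K : IntermediateField ℚ ℂ := ℚ⟮α⟯
  haveI : FiniteDimensional ℚ K := IntermediateField.adjoin.finiteDimensional hintQ
  haveI : NumberField K := ⟨⟩
  set x : K := IntermediateField.AdjoinSimple.gen ℚ α with hx
  have hxval : (x : ℂ) = α := rfl
  have key : ∀ (f : ↥K →+* ℂ) (y : ↥K), f (Polynomial.aeval y Q) = Polynomial.aeval (f y) Q :=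
    fun f y => (Polynomial.aeval_algHom_apply f.toIntAlgHom y Q).symm
  have haevx : Polynomial.aeval x Q = 0 := by
    apply (algebraMap (↥K) ℂ).injective
    rw [map_zero, key (algebraMap (↥K) ℂ) x]
    simpa [hxval] using haev
  have hxint : IsIntegral ℤ x := ⟨Q, hmonic, haevx⟩
  have hx0 : x ≠ 0 := by
    intro h
    apply hα0
    rw [← hxval, h]; simp
  -- every embedding sends x to a root of Q.map ℂ
  have hroot : ∀ φ : K →+* ℂ, φ x ∈ (Q.map (Int.castRingHom ℂ)).roots := by
    intro φ
    rw [mem_roots hQmapne]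
    show _ = 0
    
    have : Polynomial.aeval (φ x) Q = 0 := by
      rw [← key φ x, haevx, map_zero]
    simpa [Polynomial.aeval_def, Polynomial.eval_map] using this
  have hle : ∀ φ : ↥K →+* ℂ, ‖φ x‖ ≤ 1 := fun φ => hcon _ (hroot φ)
  -- the field norm of x is a nonzero rational integer, so the product of all
  -- embeddings of x has absolute value at least 1
  obtain ⟨n, hn⟩ := IsIntegrallyClosed.isIntegral_iff.mp (Algebra.isIntegral_norm ℚ hxint)
  have hN0 : Algebra.norm ℚ x ≠ 0 := by
    simpa [Algebra.norm_eq_zero_iff] using hx0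
  have hn0 : n ≠ 0 := by rintro rfl; simp at hn; exact hN0 hn.symm
  have h1 : (1:ℝ) ≤ ∏ σ : ↥K →ₐ[ℚ] ℂ, ‖σ x‖ := by
    rw [← norm_prod, ← Algebra.norm_eq_prod_embeddings ℚ ℂ x, ← hn]
    have h2 : (1:ℤ) ≤ |n| := Int.one_le_abs hn0
    have h3 : (1:ℝ) ≤ |(n:ℝ)| := by exact_mod_cast h2
    simpa using h3
  have hnorm : ∀ φ : ↥K →+* ℂ, ‖φ x‖ = 1 := by
    intro φ
    refine le_antisymm (hle φ) ?_
    set φ' : ↥K →ₐ[ℚ] ℂ := φ.toRatAlgHom with hφ'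
    have hmem : φ' ∈ (Finset.univ : Finset (↥K →ₐ[ℚ] ℂ)) := Finset.mem_univ _
    have hsplit := (Finset.mul_prod_erase Finset.univ (fun σ : ↥K →ₐ[ℚ] ℂ => ‖σ x‖) hmem).symm
    have hrest : ∏ σ ∈ Finset.univ.erase φ', ‖σ x‖ ≤ 1 :=
      Finset.prod_le_one (fun σ _ => norm_nonneg _) (fun σ _ => hle σ.toRingHom)
    have hφx : ‖φ x‖ = ‖φ' x‖ := rfl
    rw [hφx]
    nlinarith [h1.trans_eq hsplit, norm_nonneg (φ' x),
      Finset.prod_nonneg (fun σ (_ : σ ∈ Finset.univ.erase φ') => norm_nonneg (σ x))]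
  obtain ⟨m, hm0, hxm⟩ := NumberField.Embeddings.pow_eq_one_of_norm_eq_one (↥K) ℂ hxint hnorm
  refine hru α hαmem ⟨m, hm0, ?_⟩
  have : ((x ^ m : ↥K) : ℂ) = 1 := by rw [hxm]; simp
  rw [← hxval, ← this]; push_cast; ring
end
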